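/- A transitive directed acyclic graph (poset) P on a finite vertex set is realizable by intervals under the containment relation with all incomparable pairs overlapping (i.e., the complete mixed graph of P is a containment interval graph where arcs are containments and non-arcs are overlaps) if and only if P is a two-dimensional poset. -/

import Mathlib

/-- The closed interval on the real line represented by a pair of endpoints. -/
def iv (p : ℝ × ℝ) : Set ℝ := Set.Icc p.1 p.2

/-- Two intervals overlap: they intersect and neither contains the other. -/
def Overlaps (p q : ℝ × ℝ) : Prop :=
  (iv p ∩ iv q).Nonempty ∧ ¬ iv p ⊆ iv q ∧ ¬ iv q ⊆ iv p

/-- Characterization of strict inclusion of nonempty closed real intervals. -/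
lemma icc_ssub (a1 b1 a2 b2 : ℝ) (h1 : a1 ≤ b1) (h2 : a2 ≤ b2) :
    Set.Icc a2 b2 ⊂ Set.Icc a1 b1 ↔
      (a1 ≤ a2 ∧ b2 ≤ b1 ∧ ¬ (a2 ≤ a1 ∧ b1 ≤ b2)) := by
  rw [Set.ssubset_iff_subset_ne, Set.Icc_subset_Icc_iff h2]
  constructor
  · rintro ⟨⟨hl, hr⟩, hne⟩
    refine ⟨hl, hr, fun ⟨hl', hr'⟩ => hne ?_⟩
    rw [le_antisymm hl hl', le_antisymm hr' hr]
  · rintro ⟨hl, hr, hne⟩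
    refine ⟨⟨hl, hr⟩, fun heq => hne ?_⟩
    have hm1 : a1 ∈ Set.Icc a2 b2 := heq ▸ Set.left_mem_Icc.mpr h1
    have hm2 : b1 ∈ Set.Icc a2 b2 := heq ▸ Set.right_mem_Icc.mpr h1
    exact ⟨hm1.1, hm2.2⟩

/-- Any linear order on a finite type is realized by a rank function into `ℕ`,
with values bounded by the cardinality. -/
lemma exists_rank {V : Type*} [Fintype V] (s : LinearOrder V) :
    ∃ f : V → ℕ, (∀ u v : V, s.lt u v ↔ f u < f v) ∧ ∀ v, f v ≤ Fintype.card V := by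
  classical
  letI := s
  refine ⟨fun v => (Finset.univ.filter (fun u => u < v)).card, fun u v => ?_, fun v => ?_⟩
  · show u < v ↔ _
    constructor
    · intro h
      apply Finset.card_lt_card
      constructor
      · intro w hw
        simp only [Finset.mem_filter, Finset.mem_univ, true_and] at hw ⊢
        exact lt_trans hw h
      · intro hsub
        have := hsub (by simp [h] : u ∈ Finset.univ.filter (fun w => w < v))
        simp at this
    · intro h
      by_contra hlt
      have hle : v ≤ u := not_lt.mp hlt
      have : (Finset.univ.filter (fun w => w < v)).card ≤
          (Finset.univ.filter (fun w => w < u)).card := by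
        apply Finset.card_le_card
        intro w hw
        simp only [Finset.mem_filter, Finset.mem_univ, true_and] at hw ⊢
        exact lt_of_lt_of_le hw hle
      simp only at h
      omega
  · simpa using Finset.card_filter_le Finset.univ _

theorem stmt14 {V : Type*} [Fintype V] (r : V → V → Prop)
    (htrans : ∀ u v w, r u v → r v w → r u w)
    (hirrefl : ∀ v, ¬ r v v) :
    (∃ I : V → ℝ × ℝ, (∀ v, (I v).1 ≤ (I v).2) ∧
        (∀ u v, r u v ↔ iv (I v) ⊂ iv (I u)) ∧
        (∀ u v, u ≠ v → ¬ r u v → ¬ r v u → Overlaps (I u) (I v))) ↔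
    (∃ s₁ s₂ : LinearOrder V, ∀ u v, r u v ↔ (s₁.lt u v ∧ s₂.lt u v)) := by
  classical
  constructor
  · rintro ⟨I, hne, hcont, hov⟩
    set a : V → ℝ := fun v => (I v).1 with ha
    set b : V → ℝ := fun v => (I v).2 with hb
    -- characterization of r via endpoints
    have hrchar : ∀ u v, r u v ↔
        (a u ≤ a v ∧ b v ≤ b u ∧ ¬ (a v ≤ a u ∧ b u ≤ b v)) := by
      intro u v
      rw [hcont u v]
      exact icc_ssub (a u) (b u) (a v) (b v) (hne u) (hne v)
    -- endpoint-pair map is injective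
    have hinj : ∀ u v, a u = a v → b u = b v → u = v := by
      intro u v hau hbu
      by_contra hne'
      have hru : ¬ r u v := by
        rw [hrchar]; rintro ⟨_, _, h⟩; exact h ⟨le_of_eq hau.symm, le_of_eq hbu⟩
      have hrv : ¬ r v u := by
        rw [hrchar]; rintro ⟨_, _, h⟩; exact h ⟨le_of_eq hau, le_of_eq hbu.symm⟩
      obtain ⟨_, hsub, _⟩ := hov u v hne' hru hrv
      apply hsub
      show Set.Icc (a u) (b u) ⊆ Set.Icc (a v) (b v)
      rw [hau, hbu]
    -- two linear orders via lexicographic lifts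
    let F₁ : V → ℝ ×ₗ ℝᵒᵈ := fun v => toLex (a v, OrderDual.toDual (b v))
    let F₂ : V → ℝᵒᵈ ×ₗ ℝ := fun v => toLex (OrderDual.toDual (b v), a v)
    have hinj₁ : Function.Injective F₁ := by
      intro u v h
      have h' : (a u, OrderDual.toDual (b u)) = (a v, OrderDual.toDual (b v)) :=
        toLex.injective h
      exact hinj u v (congrArg Prod.fst h')
        (OrderDual.toDual.injective (congrArg Prod.snd h'))
    have hinj₂ : Function.Injective F₂ := by
      intro u v h
      have h' : (OrderDual.toDual (b u), a u) = (OrderDual.toDual (b v), a v) :=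
        toLex.injective h
      exact hinj u v (congrArg Prod.snd h')
        (OrderDual.toDual.injective (congrArg Prod.fst h'))
    refine ⟨LinearOrder.lift' F₁ hinj₁, LinearOrder.lift' F₂ hinj₂, fun u v => ?_⟩
    have hlt₁ : (LinearOrder.lift' F₁ hinj₁).lt u v ↔
        (a u < a v ∨ (a u = a v ∧ b v < b u)) := by
      show F₁ u < F₁ v ↔ _
      rw [Prod.Lex.lt_iff]
      simp [F₁, OrderDual.toDual_lt_toDual]
    have hlt₂ : (LinearOrder.lift' F₂ hinj₂).lt u v ↔
        (b v < b u ∨ (b v = b u ∧ a u < a v)) := by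
      show F₂ u < F₂ v ↔ _
      rw [Prod.Lex.lt_iff]
      simp only [F₂, ofLex_toLex, OrderDual.toDual_lt_toDual]
      constructor
      · rintro (h | ⟨h, h'⟩)
        · exact Or.inl h
        · exact Or.inr ⟨(OrderDual.toDual.injective h).symm, h'⟩
      · rintro (h | ⟨h, h'⟩)
        · exact Or.inl h
        · exact Or.inr ⟨congrArg OrderDual.toDual h.symm, h'⟩
    rw [hrchar, hlt₁, hlt₂]
    constructor
    · rintro ⟨hal, hbl, hnot⟩
      rcases lt_or_eq_of_le hal with h | h
      · refine ⟨Or.inl h, ?_⟩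
        rcases lt_or_eq_of_le hbl with h' | h'
        · exact Or.inl h'
        · exact Or.inr ⟨h', h⟩
      · rcases lt_or_eq_of_le hbl with h' | h'
        · exact ⟨Or.inr ⟨h, h'⟩, Or.inl h'⟩
        · exact absurd ⟨le_of_eq h.symm, le_of_eq h'.symm⟩ hnot
    · rintro ⟨h1, h2⟩
      rcases h1 with h1 | ⟨h1, h1'⟩ <;> rcases h2 with h2 | ⟨h2, h2'⟩ <;>
        refine ⟨by linarith, by linarith, ?_⟩ <;>
        rintro ⟨hx, hy⟩ <;> linarith
  · rintro ⟨s₁, s₂, hr⟩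
    obtain ⟨f₁, hf₁, hb₁⟩ := exists_rank s₁
    obtain ⟨f₂, hf₂, hb₂⟩ := exists_rank s₂
    set n := Fintype.card V with hn
    refine ⟨fun v => ((f₁ v : ℝ), (2 * n + 1 : ℝ) - f₂ v), ?_, ?_, ?_⟩
    · intro v
      have h1 := hb₁ v
      have h2 := hb₂ v
      simp only
      have : (f₁ v : ℝ) ≤ n := by exact_mod_cast h1
      have : (f₂ v : ℝ) ≤ n := by exact_mod_cast h2
      linarith
    · intro u v
      have hau : (f₁ u : ℝ) ≤ n := by exact_mod_cast hb₁ u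
      have hav : (f₁ v : ℝ) ≤ n := by exact_mod_cast hb₁ v
      have hbu : (f₂ u : ℝ) ≤ n := by exact_mod_cast hb₂ u
      have hbv : (f₂ v : ℝ) ≤ n := by exact_mod_cast hb₂ v
      rw [hr, hf₁, hf₂]
      show _ ↔ Set.Icc ((f₁ v : ℝ)) ((2 * n + 1 : ℝ) - f₂ v) ⊂
        Set.Icc ((f₁ u : ℝ)) ((2 * n + 1 : ℝ) - f₂ u)
      rw [icc_ssub _ _ _ _ (by linarith) (by linarith)]
      constructor
      · rintro ⟨h1, h2⟩
        have h1' : (f₁ u : ℝ) < f₁ v := by exact_mod_cast h1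
        have h2' : (f₂ u : ℝ) < f₂ v := by exact_mod_cast h2
        exact ⟨by linarith, by linarith, fun ⟨hx, hy⟩ => by linarith⟩
      · rintro ⟨h1, h2, h3⟩
        have h1' : f₁ u ≤ f₁ v := by exact_mod_cast h1
        have h2' : f₂ u ≤ f₂ v := by
          have : (f₂ u : ℝ) ≤ f₂ v := by linarith
          exact_mod_cast this
        -- rule out equality in each coordinate
        have hinj₁ : ∀ x y : V, f₁ x = f₁ y → x = y := by
          intro x y h
          letI := s₁
          rcases lt_trichotomy x y with h' | h' | h'
          · exact absurd ((hf₁ x y).mp h') (by omega)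
          · exact h'
          · exact absurd ((hf₁ y x).mp h') (by omega)
        have hinj₂ : ∀ x y : V, f₂ x = f₂ y → x = y := by
          intro x y h
          letI := s₂
          rcases lt_trichotomy x y with h' | h' | h'
          · exact absurd ((hf₂ x y).mp h') (by omega)
          · exact h'
          · exact absurd ((hf₂ y x).mp h') (by omega)
        rcases lt_or_eq_of_le h1' with hlt1 | heq1
        · rcases lt_or_eq_of_le h2' with hlt2 | heq2
          · exact ⟨hlt1, hlt2⟩
          · exact absurd (hinj₂ u v heq2 ▸ hlt1) (lt_irrefl _)
        · exact absurd (hinj₁ u v heq1) (fun h => by subst h; exact h3 ⟨le_refl _, le_refl _⟩)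
    · intro u v huv hruv hrvu
      have hne : ∀ w, (w = u ∨ w = v) → True := fun _ _ => trivial
      -- one of the orders puts u before v, the other after
      have h1 : s₁.lt u v ∨ s₁.lt v u := by
        rcases lt_trichotomy (f₁ u) (f₁ v) with h | h | h
        · exact Or.inl ((hf₁ u v).mpr h)
        · exfalso
          -- f₁ u = f₁ v with u ≠ v contradicts linearity of s₁
          letI := s₁
          rcases lt_or_gt_of_ne huv with h' | h'
          · exact absurd ((hf₁ u v).mp h') (by omega)
          · exact absurd ((hf₁ v u).mp h') (by omega)
        · exact Or.inr ((hf₁ v u).mpr h)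
      have h2 : s₂.lt u v ∨ s₂.lt v u := by
        rcases lt_trichotomy (f₂ u) (f₂ v) with h | h | h
        · exact Or.inl ((hf₂ u v).mpr h)
        · exfalso
          letI := s₂
          rcases lt_or_gt_of_ne huv with h' | h'
          · exact absurd ((hf₂ u v).mp h') (by omega)
          · exact absurd ((hf₂ v u).mp h') (by omega)
        · exact Or.inr ((hf₂ v u).mpr h)
      have hruv' := hruv; rw [hr] at hruv'
      have hrvu' := hrvu; rw [hr] at hrvu'
      have key : (f₁ u < f₁ v ∧ f₂ v < f₂ u) ∨ (f₁ v < f₁ u ∧ f₂ u < f₂ v) := by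
        rcases h1 with h1 | h1 <;> rcases h2 with h2 | h2
        · exact absurd ⟨h1, h2⟩ hruv'
        · exact Or.inl ⟨(hf₁ u v).mp h1, (hf₂ v u).mp h2⟩
        · exact Or.inr ⟨(hf₁ v u).mp h1, (hf₂ u v).mp h2⟩
        · exact absurd ⟨h1, h2⟩ hrvu'
      have hau : (f₁ u : ℝ) ≤ n := by exact_mod_cast hb₁ u
      have hav : (f₁ v : ℝ) ≤ n := by exact_mod_cast hb₁ v
      have hbu : (f₂ u : ℝ) ≤ n := by exact_mod_cast hb₂ u
      have hbv : (f₂ v : ℝ) ≤ n := by exact_mod_cast hb₂ v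
      constructor
      · refine ⟨(n : ℝ), ?_, ?_⟩ <;>
        · show (n : ℝ) ∈ Set.Icc _ _
          constructor <;> simp only <;> linarith
      constructor
      · show ¬ Set.Icc ((f₁ u : ℝ)) _ ⊆ Set.Icc ((f₁ v : ℝ)) _
        rw [Set.Icc_subset_Icc_iff (by simp only; linarith)]
        rcases key with ⟨k1, k2⟩ | ⟨k1, k2⟩
        · have : (f₁ u : ℝ) < f₁ v := by exact_mod_cast k1
          rintro ⟨hx, _⟩; linarith
        · have : (f₂ u : ℝ) < f₂ v := by exact_mod_cast k2
          rintro ⟨_, hy⟩; simp only at hy; linarith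
      · show ¬ Set.Icc ((f₁ v : ℝ)) _ ⊆ Set.Icc ((f₁ u : ℝ)) _
        rw [Set.Icc_subset_Icc_iff (by simp only; linarith)]
        rcases key with ⟨k1, k2⟩ | ⟨k1, k2⟩
        · have : (f₂ v : ℝ) < f₂ u := by exact_mod_cast k2
          rintro ⟨_, hy⟩; simp only at hy; linarith
        · have : (f₁ v : ℝ) < f₁ u := by exact_mod_cast k1
          rintro ⟨hx, _⟩; linarith
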